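/- Foata's map is a bijection on the symmetric group S_n: writing a permutation in disjoint cycle notation with the smallest element of each cycle first, ordering cycles in decreasing order of their smallest elements, and erasing the parentheses, yields an injective (hence bijective) map from S_n to S_n. -/

import Mathlib

open Classical in
/-- The minima of the cycles of `σ` (including fixed points), listed in decreasing order. -/
noncomputable def cycleMinsDesc {n : ℕ} (σ : Equiv.Perm (Fin n)) : List (Fin n) :=
  ((List.finRange n).filter fun x => decide (∀ y, σ.SameCycle x y → x ≤ y)).reverse

/-- The cycle of `σ` containing `m`, written starting at `m` (a fixed point yields `[m]`). -/
def cycleBlock {n : ℕ} (σ : Equiv.Perm (Fin n)) (m : Fin n) : List (Fin n) :=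
  (List.range (max (σ.cycleOf m).support.card 1)).map fun i => (σ ^ i) m

/-- Foata's word: write `σ` in disjoint cycle notation with the smallest element of each cycle
first, order the cycles in decreasing order of their smallest elements, and erase the
parentheses. -/
noncomputable def foataWord {n : ℕ} (σ : Equiv.Perm (Fin n)) : List (Fin n) :=
  (cycleMinsDesc σ).flatMap (cycleBlock σ)

namespace FoataAux

variable {n : ℕ}

def IsMin (σ : Equiv.Perm (Fin n)) (m : Fin n) : Prop := ∀ y, σ.SameCycle m y → m ≤ y

/-- abbreviation for the block length -/
def blen (σ : Equiv.Perm (Fin n)) (m : Fin n) : ℕ := max (σ.cycleOf m).support.card 1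

lemma blen_pos (σ : Equiv.Perm (Fin n)) (m : Fin n) : 0 < blen σ m := by simp [blen]

lemma mem_cycleMinsDesc {σ : Equiv.Perm (Fin n)} {m : Fin n} :
    m ∈ cycleMinsDesc σ ↔ IsMin σ m := by
  simp [cycleMinsDesc, IsMin, List.mem_filter, List.mem_finRange]

lemma pairwise_cycleMinsDesc (σ : Equiv.Perm (Fin n)) :
    (cycleMinsDesc σ).Pairwise (· > ·) := by
  rw [cycleMinsDesc, List.pairwise_reverse]
  exact List.Pairwise.filter _ (List.pairwise_lt_finRange n)

lemma pow_blen_apply (σ : Equiv.Perm (Fin n)) (m : Fin n) : (σ ^ blen σ m) m = m := by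
  by_cases h : σ m = m
  · exact Equiv.Perm.pow_apply_eq_self_of_apply_eq_self h _
  · have hm : m ∈ (σ.cycleOf m).support :=
      Equiv.Perm.mem_support_cycleOf_iff.2 ⟨Equiv.Perm.SameCycle.refl _ _,
        Equiv.Perm.mem_support.2 h⟩
    have hc : 1 ≤ (σ.cycleOf m).support.card := Finset.card_pos.2 ⟨m, hm⟩
    have : blen σ m = (σ.cycleOf m).support.card := by simp [blen]; omega
    rw [this]
    exact (Equiv.Perm.isCycleOn_support_cycleOf σ m).pow_card_apply hm

lemma pow_inj (σ : Equiv.Perm (Fin n)) (m : Fin n) {i j : ℕ}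
    (hi : i < blen σ m) (hj : j < blen σ m) (h : (σ ^ i) m = (σ ^ j) m) : i = j := by
  by_cases hf : σ m = m
  · have hc : (σ.cycleOf m).support.card = 0 := by
      have : σ.cycleOf m = 1 := (Equiv.Perm.cycleOf_eq_one_iff σ).2 hf
      simp [this]
    have : blen σ m = 1 := by simp [blen, hc]
    omega
  · have hm : m ∈ (σ.cycleOf m).support :=
      Equiv.Perm.mem_support_cycleOf_iff.2 ⟨Equiv.Perm.SameCycle.refl _ _,
        Equiv.Perm.mem_support.2 hf⟩
    have hc : 1 ≤ (σ.cycleOf m).support.card := Finset.card_pos.2 ⟨m, hm⟩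
    have hb : blen σ m = (σ.cycleOf m).support.card := by simp [blen]; omega
    have := ((Equiv.Perm.isCycleOn_support_cycleOf σ m).pow_apply_eq_pow_apply hm).1 h
    rw [Nat.ModEq] at this
    rw [hb] at hi hj
    rwa [Nat.mod_eq_of_lt hi, Nat.mod_eq_of_lt hj] at this

lemma mem_cycleBlock {σ : Equiv.Perm (Fin n)} {m x : Fin n} :
    x ∈ cycleBlock σ m ↔ σ.SameCycle m x := by
  constructor
  · rintro hx
    simp only [cycleBlock, List.mem_map, List.mem_range] at hx
    obtain ⟨i, -, rfl⟩ := hx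
    exact ⟨(i : ℤ), by simp⟩
  · intro h
    by_cases hf : σ m = m
    · have : x = m := by
        obtain ⟨i, hi⟩ := h
        rw [← hi, Equiv.Perm.zpow_apply_eq_self_of_apply_eq_self hf]
      subst this
      simp only [cycleBlock, List.mem_map, List.mem_range]
      exact ⟨0, by simpa [blen] using blen_pos σ x, by simp⟩
    · have hm : m ∈ (σ.cycleOf m).support :=
        Equiv.Perm.mem_support_cycleOf_iff.2 ⟨Equiv.Perm.SameCycle.refl _ _,
          Equiv.Perm.mem_support.2 hf⟩
      have hx : x ∈ (σ.cycleOf m).support :=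
        Equiv.Perm.mem_support_cycleOf_iff.2 ⟨h, Equiv.Perm.mem_support.2 hf⟩
      obtain ⟨i, hi, hix⟩ := (Equiv.Perm.isCycleOn_support_cycleOf σ m).exists_pow_eq hm hx
      have hc : 1 ≤ (σ.cycleOf m).support.card := Finset.card_pos.2 ⟨m, hm⟩
      simp only [cycleBlock, List.mem_map, List.mem_range]
      exact ⟨i, by omega, hix⟩

lemma cycleBlock_eq_cons (σ : Equiv.Perm (Fin n)) (m : Fin n) :
    ∃ t, cycleBlock σ m = m :: t := by
  have h : blen σ m = (blen σ m - 1) + 1 := by have := blen_pos σ m; omega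
  refine ⟨(List.range' 1 (blen σ m - 1)).map fun i => (σ ^ i) m, ?_⟩
  rw [cycleBlock, show max (σ.cycleOf m).support.card 1 = blen σ m from rfl, h,
    List.range_succ_eq_map]
  simp only [List.range'_eq_map_range, List.map_map, List.map_cons, pow_zero,
    Equiv.Perm.coe_one, id_eq, List.cons.injEq, true_and, Function.comp_def]
  refine List.map_congr_left fun a _ => by rw [Nat.add_comm]

lemma nodup_cycleBlock (σ : Equiv.Perm (Fin n)) (m : Fin n) : (cycleBlock σ m).Nodup := by
  refine List.Nodup.map_on ?_ List.nodup_range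
  intro i hi j hj hij
  exact pow_inj σ m (List.mem_range.1 hi) (List.mem_range.1 hj) hij

end FoataAux

namespace FoataAux

lemma append_cancel_of_pred {α : Type*} {p : α → Prop} :
    ∀ (A A' : List α) {B B' : List α}, A ++ B = A' ++ B' →
    (∀ a ∈ A, p a) → (∀ a ∈ A', p a) →
    (∀ b, B.head? = some b → ¬ p b) → (∀ b, B'.head? = some b → ¬ p b) →
    A = A'
  | [], [], _, _, _, _, _, _, _ => rfl
  | [], a :: A', B, B', h, _, hA', hB, _ => by
    simp only [List.nil_append] at h
    exact absurd (hA' a (by simp)) (hB a (by rw [h]; rfl))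
  | a :: A, [], B, B', h, hA, _, _, hB' => by
    simp only [List.nil_append] at h
    exact absurd (hA a (by simp)) (hB' a (by rw [← h]; rfl))
  | a :: A, a' :: A', B, B', h, hA, hA', hB, hB' => by
    simp only [List.cons_append, List.cons.injEq] at h
    obtain ⟨rfl, h⟩ := h
    rw [append_cancel_of_pred A A' h (fun x hx => hA x (by simp [hx]))
      (fun x hx => hA' x (by simp [hx])) hB hB']

lemma head?_flatMap_not_le {σ : Equiv.Perm (Fin n)} {m : Fin n} {T : List (Fin n)}
    (hp : ∀ m₂ ∈ T, m > m₂) :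
    ∀ b, (T.flatMap (cycleBlock σ)).head? = some b → ¬ m ≤ b := by
  intro b hb
  cases T with
  | nil => simp at hb
  | cons m₂ T₂ =>
    obtain ⟨t, ht⟩ := cycleBlock_eq_cons σ m₂
    rw [List.flatMap_cons, ht, List.cons_append, List.head?_cons, Option.some.injEq] at hb
    subst hb
    exact not_le.2 (hp m₂ (by simp))

lemma core : ∀ (L L' : List (Fin n)) (σ τ : Equiv.Perm (Fin n)),
    (∀ m ∈ L, IsMin σ m) → (∀ m ∈ L', IsMin τ m) →
    L.Pairwise (· > ·) → L'.Pairwise (· > ·) →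
    L.flatMap (cycleBlock σ) = L'.flatMap (cycleBlock τ) →
    L = L' ∧ ∀ m ∈ L, ∀ x, σ.SameCycle m x → σ x = τ x
  | [], [], σ, τ, _, _, _, _, _ => ⟨rfl, by simp⟩
  | [], m' :: T', σ, τ, _, _, _, _, h => by
    obtain ⟨t', ht'⟩ := cycleBlock_eq_cons τ m'
    simp [List.flatMap_cons, ht'] at h
  | m :: T, [], σ, τ, _, _, _, _, h => by
    obtain ⟨t, ht⟩ := cycleBlock_eq_cons σ m
    simp [List.flatMap_cons, ht] at h
  | m :: T, m' :: T', σ, τ, hσ, hτ, hp, hp', h => by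
    rw [List.flatMap_cons, List.flatMap_cons] at h
    -- heads are equal
    obtain ⟨t, ht⟩ := cycleBlock_eq_cons σ m
    obtain ⟨t', ht'⟩ := cycleBlock_eq_cons τ m'
    have hmm' : m = m' := by
      have := h
      rw [ht, ht', List.cons_append, List.cons_append] at this
      exact (List.cons.injEq _ _ _ _ ▸ this : _ ∧ _).1
    subst hmm'
    have hminσ : IsMin σ m := hσ m (by simp)
    have hminτ : IsMin τ m := hτ m (by simp)
    -- cancel the first blocks
    have hbl : cycleBlock σ m = cycleBlock τ m := by
      refine append_cancel_of_pred (p := fun x => m ≤ x) _ _ h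
        (fun a ha => hminσ a (mem_cycleBlock.1 ha))
        (fun a ha => hminτ a (mem_cycleBlock.1 ha))
        (head?_flatMap_not_le (fun m₂ hm₂ => List.rel_of_pairwise_cons hp hm₂))
        (head?_flatMap_not_le (fun m₂ hm₂ => List.rel_of_pairwise_cons hp' hm₂))
    have hrest : T.flatMap (cycleBlock σ) = T'.flatMap (cycleBlock τ) := by
      rw [hbl] at h
      exact List.append_cancel_left h
    obtain ⟨rfl, htail⟩ := core T T' σ τ (fun x hx => hσ x (by simp [hx]))
      (fun x hx => hτ x (by simp [hx])) hp.of_cons hp'.of_cons hrest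
    refine ⟨rfl, ?_⟩
    -- pointwise consequences of block equality
    have hk : blen σ m = blen τ m := by
      have := congrArg List.length hbl
      simpa [cycleBlock, blen] using this
    have hpt : ∀ i < blen σ m, (σ ^ i) m = (τ ^ i) m := by
      intro i hi
      have h2 : (List.range (blen σ m)).map (fun i => (σ ^ i) m)
          = (List.range (blen σ m)).map (fun i => (τ ^ i) m) := by
        have h1 : (List.range (blen σ m)).map (fun i => (σ ^ i) m)
            = (List.range (blen τ m)).map (fun i => (τ ^ i) m) := hbl
        rwa [← hk] at h1
      exact List.map_inj_left.1 h2 i (List.mem_range.2 hi)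
    intro m'' hm'' x hx
    rcases List.mem_cons.1 hm'' with rfl | hm''
    · -- x is in the cycle of m
      have hxb : x ∈ cycleBlock σ m'' := mem_cycleBlock.2 hx
      simp only [cycleBlock, List.mem_map, List.mem_range] at hxb
      obtain ⟨i, hi, rfl⟩ := hxb
      have hi : i < blen σ m'' := hi
      rcases Nat.lt_or_ge (i + 1) (blen σ m'') with hlt | hge
      · calc σ ((σ ^ i) m'') = (σ ^ (i + 1)) m'' := by rw [pow_succ']; rfl
          _ = (τ ^ (i + 1)) m'' := hpt _ hlt
          _ = τ ((τ ^ i) m'') := by rw [pow_succ']; rfl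
          _ = τ ((σ ^ i) m'') := by rw [hpt i hi]
      · have hieq : i + 1 = blen σ m'' := by omega
        calc σ ((σ ^ i) m'') = (σ ^ (i + 1)) m'' := by rw [pow_succ']; rfl
          _ = m'' := by rw [hieq]; exact pow_blen_apply σ m''
          _ = (τ ^ (i + 1)) m'' := by rw [hieq, hk]; exact (pow_blen_apply τ m'').symm
          _ = τ ((τ ^ i) m'') := by rw [pow_succ']; rfl
          _ = τ ((σ ^ i) m'') := by rw [hpt i hi]
    · exact htail m'' hm'' x hx

end FoataAux

namespace FoataAux

open Classical in
lemma exists_min (σ : Equiv.Perm (Fin n)) (x : Fin n) :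
    ∃ m, IsMin σ m ∧ σ.SameCycle m x := by
  classical
  let s : Finset (Fin n) := Finset.univ.filter fun y => σ.SameCycle x y
  have hxs : x ∈ s := by simp [s, Equiv.Perm.SameCycle.refl]
  have hne : s.Nonempty := ⟨x, hxs⟩
  have hmem : ∀ y, y ∈ s ↔ σ.SameCycle x y := by intro y; simp [s]
  refine ⟨s.min' hne, ?_, ?_⟩
  · intro y hy
    have h1 : σ.SameCycle x (s.min' hne) := (hmem _).1 (s.min'_mem hne)
    have h2 : σ.SameCycle x y := h1.trans hy
    exact s.min'_le y ((hmem _).2 h2)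
  · exact ((hmem _).1 (s.min'_mem hne)).symm

lemma mem_foataWord (σ : Equiv.Perm (Fin n)) (x : Fin n) : x ∈ foataWord σ := by
  obtain ⟨m, hm, hmx⟩ := exists_min σ x
  exact List.mem_flatMap.2 ⟨m, mem_cycleMinsDesc.2 hm, mem_cycleBlock.2 hmx⟩

lemma nodup_flatMap : ∀ (L : List (Fin n)) (σ : Equiv.Perm (Fin n)),
    (∀ m ∈ L, IsMin σ m) → L.Pairwise (· > ·) → (L.flatMap (cycleBlock σ)).Nodup
  | [], σ, _, _ => by simp
  | m :: T, σ, hm, hp => by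
    rw [List.flatMap_cons]
    refine List.Nodup.append (nodup_cycleBlock σ m)
      (nodup_flatMap T σ (fun x hx => hm x (by simp [hx])) hp.of_cons) ?_
    intro a ha haT
    obtain ⟨m₂, hm₂, ha₂⟩ := List.mem_flatMap.1 haT
    have h1 : σ.SameCycle m a := mem_cycleBlock.1 ha
    have h2 : σ.SameCycle m₂ a := mem_cycleBlock.1 ha₂
    have h3 : σ.SameCycle m m₂ := h1.trans h2.symm
    have hmin : IsMin σ m := hm m (by simp)
    have hmin₂ : IsMin σ m₂ := hm m₂ (by simp [hm₂])
    have : m = m₂ := le_antisymm (hmin m₂ h3) (hmin₂ m h3.symm)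
    subst this
    exact absurd (List.rel_of_pairwise_cons hp hm₂) (lt_irrefl m)

lemma nodup_foataWord (σ : Equiv.Perm (Fin n)) : (foataWord σ).Nodup :=
  nodup_flatMap _ σ (fun _ hm => mem_cycleMinsDesc.1 hm) (pairwise_cycleMinsDesc σ)

lemma length_foataWord (σ : Equiv.Perm (Fin n)) : (foataWord σ).length = n := by
  have h1 : (foataWord σ).toFinset = Finset.univ :=
    Finset.eq_univ_iff_forall.2 fun x => List.mem_toFinset.2 (mem_foataWord σ x)
  have h2 := List.toFinset_card_of_nodup (nodup_foataWord σ)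
  rw [h1] at h2
  simpa using h2.symm

lemma foata_injective : Function.Injective (foataWord (n := n)) := by
  intro σ τ h
  obtain ⟨-, hpt⟩ := core (cycleMinsDesc σ) (cycleMinsDesc τ) σ τ
    (fun _ hm => mem_cycleMinsDesc.1 hm) (fun _ hm => mem_cycleMinsDesc.1 hm)
    (pairwise_cycleMinsDesc σ) (pairwise_cycleMinsDesc τ) h
  refine Equiv.ext fun x => ?_
  obtain ⟨m, hmin, hmx⟩ := exists_min σ x
  exact hpt m (mem_cycleMinsDesc.2 hmin) x hmx

end FoataAux


/-- Foata's map is an injective, hence bijective, map from `S_n` to `S_n`: the word obtained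
from the canonical cycle notation is the one-line notation of a permutation, and the
resulting map is a bijection of the symmetric group. -/
theorem stmt1 (n : ℕ) :
    Function.Injective (foataWord (n := n)) ∧
    ∃ f : Equiv.Perm (Fin n) ≃ Equiv.Perm (Fin n),
      ∀ σ, (List.finRange n).map (f σ) = foataWord σ := by
  classical
  refine ⟨FoataAux.foata_injective, ?_⟩
  have hlen : ∀ σ : Equiv.Perm (Fin n), (foataWord σ).length = n := FoataAux.length_foataWord
  have hnd : ∀ σ : Equiv.Perm (Fin n), (foataWord σ).Nodup := FoataAux.nodup_foataWord
  let g : Equiv.Perm (Fin n) → Fin n → Fin n := fun σ i =>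
    (foataWord σ).get (Fin.cast (hlen σ).symm i)
  have hgi : ∀ σ, Function.Injective (g σ) := by
    intro σ i j hij
    have h2 := (List.nodup_iff_injective_get.1 (hnd σ)) hij
    exact Fin.ext (by simpa using congrArg Fin.val h2)
  let F : Equiv.Perm (Fin n) → Equiv.Perm (Fin n) := fun σ =>
    Equiv.ofBijective (g σ) (Finite.injective_iff_bijective.1 (hgi σ))
  have hmap : ∀ σ, (List.finRange n).map (F σ) = foataWord σ := by
    intro σ
    apply List.ext_getElem
    · simp [hlen σ]
    · intro i h1 h2
      simp [F, g, List.getElem_map, List.getElem_finRange, List.get_eq_getElem]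
  have hFinj : Function.Injective F := by
    intro σ τ hF
    apply FoataAux.foata_injective
    rw [← hmap σ, ← hmap τ, hF]
  exact ⟨Equiv.ofBijective F (Finite.injective_iff_bijective.1 hFinj), fun σ => hmap σ⟩
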